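/- Let M be a matroid on an n-element set E with rank function r and rank r(M) = r(E). Then in the ring of formal power series in two variables v, w with integer coefficients, the following identity holds: (1 − vw)·(1 − v)^n·(1 − w)^n · Σ_{t,u ≥ 0} Q_M(t,u)·v^t·w^u = Σ_{S ⊆ E} v^{r(M) − r(S)} · w^{|S| − r(S)} · (1 − v)^{|S|} · (1 − w)^{n − |S|}. (This is the denominator-cleared form of the identity Σ_{t,u≥0} Q_M(t,u)v^t w^u = T_M((1−vw)/(1−v), (1−vw)/(1−w)) / ((1−v)^{n−r(M)}(1−w)^{r(M)}(1−vw)), which expresses that the Tutte polynomial of M and the lattice-point counting function Q_M determine each other.) -/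

import Mathlib

open scoped Pointwise
open Finset

noncomputable section

/-- The standard simplex `Δ = conv{e_i : i ∈ E}` in `ℝ^E`. -/
def stdSimplexSet (α : Type*) [Fintype α] [DecidableEq α] : Set (α → ℝ) :=
  convexHull ℝ {x : α → ℝ | ∃ i : α, x = Pi.single i (1 : ℝ)}

/-- The number of lattice points (points of `ℤ^E`) in a subset of `ℝ^E`. -/
def latticeCount {α : Type*} (P : Set (α → ℝ)) : ℕ :=
  Set.ncard {q : α → ℤ | (fun i => (q i : ℝ)) ∈ P}

/-- `Qcount P t u` is the number of lattice points of `P + uΔ + t∇`. -/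
def Qcount {α : Type*} [Fintype α] [DecidableEq α] (P : Set (α → ℝ)) (t u : ℕ) : ℕ :=
  latticeCount (P + (u : ℝ) • stdSimplexSet α + (t : ℝ) • (-stdSimplexSet α))

/-- A polymatroid on a finite ground set, given by its rank function. -/
structure PolyMatroid (α : Type*) [Fintype α] [DecidableEq α] where
  rk : Finset α → ℕ
  rk_empty : rk ∅ = 0
  rk_mono : ∀ ⦃S T : Finset α⦄, S ⊆ T → rk S ≤ rk T
  rk_submod : ∀ S T : Finset α, rk (S ∪ T) + rk (S ∩ T) ≤ rk S + rk T

variable {α : Type*} [Fintype α] [DecidableEq α]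

/-- A basis of a matroid (an independent spanning set). -/
def PolyMatroid.IsBasis (M : PolyMatroid α) (B : Finset α) : Prop :=
  M.rk B = B.card ∧ M.rk B = M.rk Finset.univ

/-- The indicator vector of a finite set. -/
def indicatorVec {α : Type*} [DecidableEq α] (B : Finset α) : α → ℝ :=
  fun i => if i ∈ B then 1 else 0

/-- The base polytope of a matroid: the convex hull of indicator vectors of bases. -/
def matroidPolytope (M : PolyMatroid α) : Set (α → ℝ) :=
  convexHull ℝ {x : α → ℝ | ∃ B : Finset α, M.IsBasis B ∧ x = indicatorVec B}

/-- The base polytope of a polymatroid, by its inequality description. -/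
def PolyMatroid.polytope (M : PolyMatroid α) : Set (α → ℝ) :=
  {x | (∑ i, x i) = (M.rk Finset.univ : ℝ) ∧
    ∀ S : Finset α, (∑ i ∈ S, x i) ≤ (M.rk S : ℝ)}

/-- `c : ℕ × ℕ → ℤ` is a `Q'`-datum for the counting function `Q` if it is finitely
supported and interpolates `Q` in the binomial basis. -/
def IsQdatumFun (Q : ℕ → ℕ → ℕ) (c : ℕ × ℕ → ℤ) : Prop :=
  (Function.support c).Finite ∧
    ∀ t u : ℕ, (Q t u : ℤ) = ∑ᶠ p : ℕ × ℕ, c p * (t.choose p.1 : ℤ) * (u.choose p.2 : ℤ)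

/-- A `Q'`-datum for the lattice-point counting function of the polytope `P`. -/
def IsQdatum (P : Set (α → ℝ)) (c : ℕ × ℕ → ℤ) : Prop :=
  IsQdatumFun (Qcount P) c

/-- The polynomial `Q'` associated to a `Q'`-datum, as a function on `ℚ × ℚ`. -/
def Qprime (c : ℕ × ℕ → ℤ) (x y : ℚ) : ℚ :=
  ∑ᶠ p : ℕ × ℕ, (c p : ℚ) * (x - 1) ^ p.1 * (y - 1) ^ p.2

/-- The polynomial `Q'` associated to a `Q'`-datum, as a polynomial in two variables. -/
def QprimePoly (c : ℕ × ℕ → ℤ) : MvPolynomial (Fin 2) ℤ :=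
  ∑ᶠ p : ℕ × ℕ,
    MvPolynomial.C (c p) * (MvPolynomial.X 0 - 1) ^ p.1 * (MvPolynomial.X 1 - 1) ^ p.2

/-- The Tutte polynomial of a matroid, as a function on `ℚ × ℚ`. -/
def TuttePoly (M : PolyMatroid α) (x y : ℚ) : ℚ :=
  ∑ S : Finset α,
    (x - 1) ^ (M.rk Finset.univ - M.rk S) * (y - 1) ^ (S.card - M.rk S)


namespace PolyMatroid

variable (M : PolyMatroid α)

lemma rk_le_card (hmat : ∀ i : α, M.rk {i} ≤ 1) (S : Finset α) : M.rk S ≤ S.card := by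
  induction S using Finset.induction with
  | empty => simp [M.rk_empty]
  | @insert i S hx ih =>
    have h := M.rk_submod S {i}
    have he : S ∪ {i} = insert i S := by
      ext j; simp [Finset.mem_insert, or_comm]
    rw [he] at h
    have h2 : M.rk (insert i S) ≤ M.rk S + M.rk {i} := le_trans (Nat.le_add_right _ _) h
    have h3 := hmat i
    have h4 := Finset.card_insert_of_notMem hx
    omega

lemma rk_le_rk_add_card_sdiff (hmat : ∀ i : α, M.rk {i} ≤ 1) {T S : Finset α} (h : T ⊆ S) :
    M.rk S ≤ M.rk T + (S \ T).card := by
  have hu : T ∪ (S \ T) = S := Finset.union_sdiff_of_subset h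
  have h2 := M.rk_submod T (S \ T)
  rw [hu] at h2
  have := M.rk_le_card hmat (S \ T)
  omega

lemma card_inter_basis_le (hmat : ∀ i : α, M.rk {i} ≤ 1) {B : Finset α} (hB : M.IsBasis B)
    (A : Finset α) : (A ∩ B).card ≤ M.rk A := by
  have h1 : M.rk B ≤ M.rk (A ∩ B) + (B \ (A ∩ B)).card :=
    M.rk_le_rk_add_card_sdiff hmat (Finset.inter_subset_right)
  have h2 : B \ (A ∩ B) = B \ A := by ext j; simp only [Finset.mem_sdiff, Finset.mem_inter]; tauto
  rw [h2] at h1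
  have h3 : (A ∩ B).card + (B \ A).card = B.card := by
    rw [Finset.inter_comm]
    exact Finset.card_inter_add_card_sdiff B A
  have h4 : M.rk (A ∩ B) ≤ M.rk A := M.rk_mono Finset.inter_subset_left
  have h5 := hB.1
  omega

/-- Key maximizer lemma: `S_y = {i : y i ≥ 1}` maximizes `y(A) - rk(A)`. -/
lemma max_lemma (hmat : ∀ i : α, M.rk {i} ≤ 1) (y : α → ℤ) (A : Finset α) :
    (∑ i ∈ A, y i) - M.rk A ≤
      (∑ i ∈ univ.filter (fun i => 1 ≤ y i), y i) - M.rk (univ.filter (fun i => 1 ≤ y i)) := by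
  set S := univ.filter (fun i => 1 ≤ y i) with hS
  have h1 : (∑ i ∈ A, y i) ≤ ∑ i ∈ A ∩ S, y i := by
    have hsplit : (∑ i ∈ A ∩ S, y i) + ∑ i ∈ A \ S, y i = ∑ i ∈ A, y i :=
      Finset.sum_inter_add_sum_sdiff A S y
    have hnonpos : (∑ i ∈ A \ S, y i) ≤ 0 := by
      apply Finset.sum_nonpos
      intro i hi
      simp only [hS, Finset.mem_sdiff, Finset.mem_filter, Finset.mem_univ, true_and] at hi
      omega
    omega
  have h2 : M.rk (A ∩ S) ≤ M.rk A := M.rk_mono Finset.inter_subset_left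
  -- middle step: y(A∩S) - rk(A∩S) ≤ y(S) - rk(S)
  have h3 : (∑ i ∈ A ∩ S, y i) - M.rk (A ∩ S) ≤ (∑ i ∈ S, y i) - M.rk S := by
    have hsub : A ∩ S ⊆ S := Finset.inter_subset_right
    have hrk : M.rk S ≤ M.rk (A ∩ S) + (S \ (A ∩ S)).card :=
      M.rk_le_rk_add_card_sdiff hmat hsub
    have hsum : (∑ i ∈ A ∩ S, y i) + ∑ i ∈ S \ (A ∩ S), y i = ∑ i ∈ S, y i := by
      have := Finset.sum_sdiff (f := y) hsub
      omega
    have hbig : ((S \ (A ∩ S)).card : ℤ) ≤ ∑ i ∈ S \ (A ∩ S), y i := by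
      have : ∀ i ∈ S \ (A ∩ S), (1 : ℤ) ≤ y i := by
        intro i hi
        simp only [hS, Finset.mem_sdiff, Finset.mem_filter, Finset.mem_univ, true_and] at hi
        exact hi.1
      calc ((S \ (A ∩ S)).card : ℤ) = ∑ _i ∈ S \ (A ∩ S), (1 : ℤ) := by simp
        _ ≤ ∑ i ∈ S \ (A ∩ S), y i := Finset.sum_le_sum this
    push_cast at hrk ⊢
    omega
  push_cast at *
  omega

end PolyMatroid

namespace PolyMatroid

omit [Fintype α] in
lemma sum_bump (A : Finset α) (i : α) (y : α → ℤ) (z : ℤ) :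
    (∑ j ∈ A, (if j = i then y j + z else y j)) = (∑ j ∈ A, y j) + (if i ∈ A then z else 0) := by
  have h : ∀ j, (if j = i then y j + z else y j) = y j + (if j = i then z else 0) := by
    intro j; split <;> ring
  simp only [h, Finset.sum_add_distrib, Finset.sum_ite_eq' A i (fun _ => z)]

lemma sum_bump_nat (i : α) (b : α → ℕ) :
    (∑ j, (if j = i then b j + 1 else b j)) = (∑ j, b j) + 1 := by
  have h : ∀ j, (if j = i then b j + 1 else b j) = b j + (if j = i then 1 else 0) := by
    intro j; split <;> ring
  simp [h, Finset.sum_add_distrib, Finset.sum_ite_eq' univ i (fun _ => 1)]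

variable (M : PolyMatroid α)

lemma uncross (c : ℤ) (y : α → ℤ) (hub : ∀ A : Finset α, (∑ i ∈ A, y i) ≤ M.rk A + c)
    {A B : Finset α} (hA : (∑ i ∈ A, y i) = M.rk A + c) (hB : (∑ i ∈ B, y i) = M.rk B + c) :
    (∑ i ∈ A ∪ B, y i) = M.rk (A ∪ B) + c ∧ (∑ i ∈ A ∩ B, y i) = M.rk (A ∩ B) + c := by
  have hsum : (∑ i ∈ A ∪ B, y i) + ∑ i ∈ A ∩ B, y i = (∑ i ∈ A, y i) + ∑ i ∈ B, y i :=
    Finset.sum_union_inter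
  have hsm := M.rk_submod A B
  have h1 := hub (A ∪ B); have h2 := hub (A ∩ B)
  push_cast at *
  constructor <;> omega

lemma exists_decomp [Nonempty α] (hmat : ∀ i : α, M.rk {i} ≤ 1) :
    ∀ (u t : ℕ) (y : α → ℤ),
    ((∑ i, y i) = (M.rk univ : ℤ) + u - t) →
    (∀ A : Finset α, (∑ i ∈ A, y i) ≤ M.rk A + u) →
    ∃ (B : Finset α) (a b : α → ℕ), M.IsBasis B ∧ (∑ i, a i) = u ∧ (∑ i, b i) = t ∧
      ∀ i, y i = (if i ∈ B then (1 : ℤ) else 0) + a i - b i := by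
  intro u
  induction u with
  | zero =>
    intro t
    induction t with
    | zero =>
      intro y hsum hub
      simp only [Nat.cast_zero, add_zero, sub_zero] at hsum hub
      have hy01 : ∀ i, y i = 0 ∨ y i = 1 := by
        intro i
        have h1 := hub {i}
        rw [Finset.sum_singleton] at h1
        have h2 := hmat i
        have h3 := hub (univ.erase i)
        have h4 : (∑ j ∈ univ.erase i, y j) + y i = ∑ j, y j :=
          Finset.sum_erase_add univ y (Finset.mem_univ i)
        have h5 : M.rk (univ.erase i) ≤ M.rk univ := M.rk_mono (Finset.erase_subset _ _)
        push_cast at *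
        omega
      set B := univ.filter (fun i => y i = 1) with hB
      have hind : ∀ i, y i = (if i ∈ B then (1 : ℤ) else 0) := by
        intro i
        rcases hy01 i with h | h <;> simp [hB, h]
      have hyB : (∑ i ∈ B, y i) = (B.card : ℤ) := by
        rw [Finset.sum_congr rfl (fun i hi => by
          simp only [hB, Finset.mem_filter] at hi; exact hi.2)]
        simp
      have hsumB : (∑ i, y i) = (B.card : ℤ) := by
        rw [← hyB]
        symm
        apply Finset.sum_subset (Finset.subset_univ B)
        intro i _ hiB
        rcases hy01 i with h | h
        · exact h
        · exact absurd (by simp [hB, h]) hiB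
      have hrkB : M.rk B = B.card := by
        have h1 := hub B
        rw [hyB] at h1
        have h2 := M.rk_le_card hmat B
        push_cast at h1
        omega
      have hbasis : M.IsBasis B := by
        constructor
        · exact hrkB
        · rw [hrkB]
          have : (B.card : ℤ) = (M.rk univ : ℤ) := by rw [← hsumB, hsum]
          exact_mod_cast this
      exact ⟨B, (fun _ => 0), (fun _ => 0), hbasis, by simp, by simp,
        fun i => by simpa using hind i⟩
    | succ t iht =>
      intro y hsum hub
      simp only [Nat.cast_zero, add_zero] at hsum hub
      classical
      set Tt := univ.filter (fun A : Finset α => (∑ i ∈ A, y i) = (M.rk A : ℤ)) with hTt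
      have hub0 : ∀ A : Finset α, (∑ i ∈ A, y i) ≤ (M.rk A : ℤ) + 0 := by
        intro A; simpa using hub A
      have hne : Tt.Nonempty := ⟨∅, by simp [hTt, M.rk_empty]⟩
      obtain ⟨U, hU, hUmax⟩ := Finset.exists_max_image Tt Finset.card hne
      have hUt : (∑ i ∈ U, y i) = (M.rk U : ℤ) := by
        simpa [hTt] using hU
      have htight_sub : ∀ A ∈ Tt, A ⊆ U := by
        intro A hA
        have hAt : (∑ i ∈ A, y i) = (M.rk A : ℤ) := by simpa [hTt] using hA
        have hun := (M.uncross 0 y hub0 (by simpa using hAt) (by simpa using hUt)).1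
        have hmem : A ∪ U ∈ Tt := by simp [hTt]; simpa using hun
        have hcard := hUmax _ hmem
        have := Finset.eq_of_subset_of_card_le (Finset.subset_union_right : U ⊆ A ∪ U) hcard
        rw [this]
        exact Finset.subset_union_left
      have hUniv : univ ∉ Tt := by
        intro h
        have : (∑ i, y i) = (M.rk univ : ℤ) := by simpa [hTt] using h
        rw [hsum] at this
        push_cast at this
        omega
      have : U ≠ univ := fun h => hUniv (h ▸ hU)
      obtain ⟨i, hiU⟩ : ∃ i, i ∉ U := by
        by_contra h
        push_neg at h
        exact this (Finset.eq_univ_iff_forall.mpr h)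
      set y' := fun j => if j = i then y j + 1 else y j with hy'
      have hsumy' : ∀ A : Finset α, (∑ j ∈ A, y' j) = (∑ j ∈ A, y j) + (if i ∈ A then 1 else 0) :=
        fun A => sum_bump A i y 1
      have hub' : ∀ A : Finset α, (∑ j ∈ A, y' j) ≤ (M.rk A : ℤ) + 0 := by
        intro A
        rw [hsumy']
        by_cases hiA : i ∈ A
        · have hAnt : A ∉ Tt := fun h => hiU (htight_sub A h hiA)
          have : (∑ j ∈ A, y j) ≠ (M.rk A : ℤ) := by
            intro h; exact hAnt (by simp [hTt, h])
          have := lt_of_le_of_ne (hub0 A) (by simpa using this)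
          simp [hiA]
          omega
        · simp [hiA]
          simpa using hub0 A
      have hsum' : (∑ j, y' j) = (M.rk univ : ℤ) + 0 - t := by
        rw [hsumy' univ]
        simp only [Finset.mem_univ, if_true]
        push_cast at hsum ⊢
        omega
      obtain ⟨B, a, b, hbasis, ha, hb, hid⟩ := iht y' (by simpa using hsum') (by simpa using hub')
      refine ⟨B, a, (fun j => if j = i then b j + 1 else b j), hbasis, ha, ?_, ?_⟩
      · rw [sum_bump_nat i b, hb]
      · intro j
        have hj := hid j
        by_cases hji : j = i
        · subst hji
          simp only [hy', if_pos rfl] at hj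
          simp only [if_pos rfl]
          push_cast
          omega
        · simp only [hy', if_neg hji] at hj
          simp only [if_neg hji]
          exact hj
  | succ u ihu =>
    intro t y hsum hub
    classical
    set Tt := univ.filter
      (fun A : Finset α => (∑ i ∈ A, y i) = (M.rk A : ℤ) + (u + 1)) with hTt
    have hub' : ∀ A : Finset α, (∑ i ∈ A, y i) ≤ (M.rk A : ℤ) + ((u : ℤ) + 1) := by
      intro A; have := hub A; push_cast at this ⊢; omega
    obtain ⟨i, hi⟩ : ∃ i : α, ∀ A ∈ Tt, i ∈ A := by
      by_cases hne : Tt.Nonempty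
      · obtain ⟨T, hT, hTmin⟩ := Finset.exists_min_image Tt Finset.card hne
        have hTt' : (∑ j ∈ T, y j) = (M.rk T : ℤ) + (u + 1) := by simpa [hTt] using hT
        have hTne : T.Nonempty := by
          rcases Finset.eq_empty_or_nonempty T with h | h
          · exfalso
            rw [h] at hTt'
            simp [M.rk_empty] at hTt'
            omega
          · exact h
        obtain ⟨i, hiT⟩ := hTne
        refine ⟨i, fun A hA => ?_⟩
        have hAt : (∑ j ∈ A, y j) = (M.rk A : ℤ) + (u + 1) := by simpa [hTt] using hA
        have hun := (M.uncross ((u : ℤ) + 1) y hub' hAt hTt').2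
        have hmem : A ∩ T ∈ Tt := by simp [hTt]; push_cast; push_cast at hun; linarith
        have hcard := hTmin _ hmem
        have heq := Finset.eq_of_subset_of_card_le
          (Finset.inter_subset_right : A ∩ T ⊆ T) hcard
        have : T ⊆ A := heq ▸ Finset.inter_subset_left
        exact this hiT
      · exact ⟨Classical.arbitrary α, fun A hA => absurd ⟨A, hA⟩ hne⟩
    set y' := fun j => if j = i then y j - 1 else y j with hy'
    have hsumy' : ∀ A : Finset α, (∑ j ∈ A, y' j) = (∑ j ∈ A, y j) + (if i ∈ A then -1 else 0) :=
      fun A => sum_bump A i y (-1)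
    have hub'' : ∀ A : Finset α, (∑ j ∈ A, y' j) ≤ (M.rk A : ℤ) + u := by
      intro A
      rw [hsumy']
      by_cases hiA : i ∈ A
      · have := hub' A
        simp [hiA]
        omega
      · have hAnt : A ∉ Tt := fun h => hiA (hi A h)
        have hne2 : (∑ j ∈ A, y j) ≠ (M.rk A : ℤ) + (u + 1) := by
          intro h; exact hAnt (by simp [hTt, h])
        have := hub' A
        simp [hiA]
        omega
    have hsum' : (∑ j, y' j) = (M.rk univ : ℤ) + u - t := by
      rw [hsumy' univ]
      simp only [Finset.mem_univ, if_true]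
      push_cast at hsum ⊢
      omega
    obtain ⟨B, a, b, hbasis, ha, hb, hid⟩ := ihu t y' hsum' hub''
    refine ⟨B, (fun j => if j = i then a j + 1 else a j), b, hbasis, ?_, hb, ?_⟩
    · rw [sum_bump_nat i a, ha]
    · intro j
      have hj := hid j
      by_cases hji : j = i
      · subst hji
        simp only [hy', if_pos rfl] at hj
        simp only [if_pos rfl]
        push_cast
        omega
      · simp only [hy', if_neg hji] at hj
        simp only [if_neg hji]
        exact hj

end PolyMatroid


section Geometry

variable {α : Type*} [Fintype α] [DecidableEq α]

lemma stdSimplexSet_subset :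
    stdSimplexSet α ⊆ {δ : α → ℝ | (∀ i, 0 ≤ δ i) ∧ (∑ i, δ i) = 1} := by
  apply convexHull_min
  · rintro x ⟨i, rfl⟩
    constructor
    · intro j
      by_cases h : j = i <;> simp [Pi.single_apply, h]
    · simp [Pi.single_apply]
  · intro x hx y hy s r hs hr hsr
    constructor
    · intro i
      have h1 := hx.1 i; have h2 := hy.1 i
      have h3 : (s • x + r • y) i = s * x i + r * y i := rfl
      rw [h3]
      positivity
    · have h3 : (∑ i, (s • x + r • y) i) = s * (∑ i, x i) + r * (∑ i, y i) := by
        simp [Finset.sum_add_distrib, Finset.mul_sum]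
      rw [h3, hx.2, hy.2]
      linarith

lemma sum_indicator_inter (B A : Finset α) :
    (∑ i ∈ A, (if i ∈ B then (1 : ℝ) else 0)) = ((A ∩ B).card : ℝ) := by
  rw [Finset.sum_ite_mem, Finset.sum_const]
  simp

lemma matroidPolytope_subset (M : PolyMatroid α) (hmat : ∀ i : α, M.rk {i} ≤ 1) :
    matroidPolytope M ⊆
      {x : α → ℝ | (∑ i, x i) = (M.rk Finset.univ : ℝ) ∧
        ∀ A : Finset α, (∑ i ∈ A, x i) ≤ (M.rk A : ℝ)} := by
  apply convexHull_min
  · rintro x ⟨B, hB, rfl⟩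
    constructor
    · show (∑ i, (if i ∈ B then (1:ℝ) else 0)) = _
      rw [sum_indicator_inter B Finset.univ, Finset.univ_inter]
      have h1 := hB.1; have h2 := hB.2
      have : B.card = M.rk Finset.univ := by omega
      rw [this]
    · intro A
      show (∑ i ∈ A, (if i ∈ B then (1:ℝ) else 0)) ≤ _
      rw [sum_indicator_inter B A]
      exact_mod_cast M.card_inter_basis_le hmat hB A
  · intro x hx y hy s r hs hr hsr
    constructor
    · have h3 : (∑ i, (s • x + r • y) i) = s * (∑ i, x i) + r * (∑ i, y i) := by
        simp [Finset.sum_add_distrib, Finset.mul_sum]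
      rw [h3, hx.1, hy.1]
      have : s + r = 1 := hsr
      nlinarith [hx.1, hy.1]
    · intro A
      have h3 : (∑ i ∈ A, (s • x + r • y) i) = s * (∑ i ∈ A, x i) + r * (∑ i ∈ A, y i) := by
        simp [Finset.sum_add_distrib, Finset.mul_sum]
      rw [h3]
      have hxA := hx.2 A; have hyA := hy.2 A
      nlinarith

/-- A scaled nonnegative integer vector with coordinate sum `u` lies in `u • Δ`. -/
lemma natvec_mem_smul_simplex [Nonempty α] (u : ℕ) (a : α → ℕ) (ha : (∑ i, a i) = u) :
    (fun i => (a i : ℝ)) ∈ (u : ℝ) • stdSimplexSet α := by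
  rcases Nat.eq_zero_or_pos u with hu | hu
  · subst hu
    have haz : ∀ i, a i = 0 := by
      intro i
      have := Finset.sum_eq_zero_iff.mp ha i (Finset.mem_univ i)
      exact this
    have h0 : (fun i => (a i : ℝ)) = (0 : α → ℝ) := by
      funext i; simp [haz i]
    rw [h0]
    have hne : (stdSimplexSet α).Nonempty := by
      obtain ⟨i⟩ := ‹Nonempty α›
      exact ⟨Pi.single i 1, subset_convexHull ℝ _ ⟨i, rfl⟩⟩
    rw [Nat.cast_zero, Set.zero_smul_set hne]
    exact Set.zero_mem_zero
  · have hu0 : (u : ℝ) ≠ 0 := by positivity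
    set w : α → ℝ := fun i => (a i : ℝ) with hw
    have hwsum : (∑ i, w i) = (u : ℝ) := by
      rw [hw]; push_cast [← ha]; rfl
    have hcm : Finset.univ.centerMass w (fun i => Pi.single i (1:ℝ)) ∈ stdSimplexSet α := by
      apply Finset.centerMass_mem_convexHull
      · intro i _; positivity
      · rw [hwsum]; positivity
      · intro i _; exact ⟨i, rfl⟩
    have hsingle : (∑ i, w i • (Pi.single i (1:ℝ) : α → ℝ)) = w := by
      funext j
      rw [Finset.sum_apply]
      have h4 : ∀ i, (w i • (Pi.single i (1:ℝ) : α → ℝ)) j = if j = i then w i else 0 := by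
        intro i
        by_cases h : j = i <;> simp [Pi.single_apply, h]
      simp only [h4]
      simp
    have hval : Finset.univ.centerMass w (fun i => Pi.single i (1:ℝ)) = (u : ℝ)⁻¹ • w := by
      unfold Finset.centerMass
      rw [hwsum, hsingle]
    have : (u : ℝ) • Finset.univ.centerMass w (fun i => Pi.single i (1:ℝ)) = w := by
      rw [hval, smul_inv_smul₀ hu0]
    rw [← this]
    exact Set.smul_mem_smul_set hcm

lemma mem_polytope_sum_iff [Nonempty α] (M : PolyMatroid α) (hmat : ∀ i : α, M.rk {i} ≤ 1)
    (t u : ℕ) (q : α → ℤ) :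
    ((fun i => (q i : ℝ)) ∈
        matroidPolytope M + (u : ℝ) • stdSimplexSet α + (t : ℝ) • (-stdSimplexSet α)) ↔
      ((∑ i, q i) = (M.rk Finset.univ : ℤ) + u - t ∧
        ∀ A : Finset α, (∑ i ∈ A, q i) ≤ (M.rk A : ℤ) + u) := by
  constructor
  · rintro ⟨w, hw, z, hz, hwzq⟩
    obtain ⟨x, hx, s, hs, hws⟩ := hw
    obtain ⟨δ, hδ, rfl⟩ := Set.mem_smul_set.mp hs
    obtain ⟨ε', hε', rfl⟩ := Set.mem_smul_set.mp hz
    have hε : -ε' ∈ stdSimplexSet α := Set.mem_neg.mp hε'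
    obtain ⟨hx1, hx2⟩ := matroidPolytope_subset M hmat hx
    obtain ⟨hδ1, hδ2⟩ := stdSimplexSet_subset hδ
    obtain ⟨hε1, hε2⟩ := stdSimplexSet_subset hε
    have hq : ∀ i, (q i : ℝ) = x i + (u : ℝ) * δ i - (t : ℝ) * (-ε' i) := by
      intro i
      have := congrFun hwzq i
      rw [← hws] at this
      have h2 : (x + (u:ℝ) • δ) i + ((t:ℝ) • ε') i = (q i : ℝ) := this
      simp only [Pi.add_apply, Pi.smul_apply, smul_eq_mul] at h2
      ring_nf
      ring_nf at h2
      linarith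
    constructor
    · have hsum : ((∑ i, q i : ℤ) : ℝ) = (M.rk Finset.univ : ℝ) + u - t := by
        push_cast
        rw [Finset.sum_congr rfl (fun i _ => hq i)]
        rw [Finset.sum_sub_distrib, Finset.sum_add_distrib, ← Finset.mul_sum, ← Finset.mul_sum]
        have hε2' : (∑ i, -ε' i) = 1 := hε2
        rw [hx1, hδ2, hε2']
        ring
      exact_mod_cast hsum
    · intro A
      have hδA : (∑ i ∈ A, δ i) ≤ 1 := by
        rw [← hδ2]
        exact Finset.sum_le_sum_of_subset_of_nonneg (Finset.subset_univ A)
          (fun i _ _ => hδ1 i)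
      have hεA : (0:ℝ) ≤ ∑ i ∈ A, -ε' i := Finset.sum_nonneg (fun i _ => hε1 i)
      have hineq : ((∑ i ∈ A, q i : ℤ) : ℝ) ≤ (M.rk A : ℝ) + u := by
        push_cast
        rw [Finset.sum_congr rfl (fun i _ => hq i)]
        rw [Finset.sum_sub_distrib, Finset.sum_add_distrib, ← Finset.mul_sum, ← Finset.mul_sum]
        have h1 : (∑ i ∈ A, x i) ≤ (M.rk A : ℝ) := hx2 A
        have h2 : (u : ℝ) * (∑ i ∈ A, δ i) ≤ (u : ℝ) * 1 := by
          apply mul_le_mul_of_nonneg_left hδA (by positivity)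
        have h3 : (0:ℝ) ≤ (t : ℝ) * (∑ i ∈ A, -ε' i) := by positivity
        linarith
      exact_mod_cast hineq
  · rintro ⟨hsum, hub⟩
    obtain ⟨B, a, b, hbasis, ha, hb, hid⟩ := M.exists_decomp hmat u t q hsum
      (fun A => by exact_mod_cast hub A)
    have hmem1 : indicatorVec B ∈ matroidPolytope M :=
      subset_convexHull ℝ _ ⟨B, hbasis, rfl⟩
    have hmem2 : (fun i => (a i : ℝ)) ∈ (u : ℝ) • stdSimplexSet α :=
      natvec_mem_smul_simplex u a ha
    have hmem3 : (fun i => -(b i : ℝ)) ∈ (t : ℝ) • (-stdSimplexSet α) := by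
      have h := natvec_mem_smul_simplex t b hb
      obtain ⟨β, hβ, hβeq⟩ := Set.mem_smul_set.mp h
      apply Set.mem_smul_set.mpr
      refine ⟨-β, Set.neg_mem_neg.mpr hβ, ?_⟩
      rw [smul_neg, hβeq]
      funext i
      simp
    have heq : (fun i => (q i : ℝ)) =
        (indicatorVec B + (fun i => (a i : ℝ))) + (fun i => -(b i : ℝ)) := by
      funext i
      have := hid i
      simp only [Pi.add_apply, indicatorVec]
      have : (q i : ℝ) = (if i ∈ B then (1:ℝ) else 0) + (a i : ℝ) - (b i : ℝ) := by
        rcases Finset.decidableMem i B with h | h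
        · push_cast [hid i]
          simp_all
        · push_cast [hid i]
          simp_all
      rw [this]
      ring
    rw [heq]
    exact Set.add_mem_add (Set.add_mem_add hmem1 hmem2) hmem3

end Geometry


section Counting

variable {α : Type*} [Fintype α] [DecidableEq α]

def Dset (M : PolyMatroid α) (t u : ℕ) : Set (α → ℤ) :=
  {y | (∑ i, y i) = (M.rk Finset.univ : ℤ) + u - t ∧
    ∀ A : Finset α, (∑ i ∈ A, y i) ≤ (M.rk A : ℤ) + u}

def Tset (M : PolyMatroid α) (t u : ℕ) : Set (α → ℤ) :=
  {y | y ∈ Dset M t u ∧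
    (∑ i ∈ Finset.univ.filter (fun i => 1 ≤ y i), y i)
      = (M.rk (Finset.univ.filter (fun i => 1 ≤ y i)) : ℤ) + u}

def Aset (S : Finset α) (m : ℕ) : Set (α → ℕ) :=
  {a | (∀ i ∉ S, a i = 0) ∧ (∑ i ∈ S, a i) = m}

def cnt (S : Finset α) (m : ℕ) : ℕ := (Aset S m).ncard

lemma Aset_finite (S : Finset α) (m : ℕ) : (Aset S m).Finite := by
  apply Set.Finite.subset (Set.Finite.pi (t := fun _ : α => Set.Iic m)
    (fun _ => Set.finite_Iic m))
  rintro a ⟨h1, h2⟩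
  intro i _
  simp only [Set.mem_Iic]
  by_cases hi : i ∈ S
  · exact h2 ▸ Finset.single_le_sum (fun j _ => Nat.zero_le (a j)) hi
  · simp [h1 i hi]

lemma Dset_finite (M : PolyMatroid α) (hmat : ∀ i : α, M.rk {i} ≤ 1) (t u : ℕ) :
    (Dset M t u).Finite := by
  apply Set.Finite.subset (Set.Finite.pi (t := fun _ : α => Set.Icc (-(t:ℤ)) (u+1))
    (fun _ => Set.finite_Icc _ _))
  rintro y ⟨h1, h2⟩
  intro i _
  simp only [Set.mem_Icc]
  constructor
  · have h3 := h2 (Finset.univ.erase i)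
    have h4 : (∑ j ∈ Finset.univ.erase i, y j) + y i = ∑ j, y j :=
      Finset.sum_erase_add Finset.univ y (Finset.mem_univ i)
    have h5 : M.rk (Finset.univ.erase i) ≤ M.rk Finset.univ :=
      M.rk_mono (Finset.erase_subset _ _)
    push_cast at *
    omega
  · have h3 := h2 {i}
    rw [Finset.sum_singleton] at h3
    have h4 := hmat i
    push_cast at *
    omega

lemma Tset_finite (M : PolyMatroid α) (hmat : ∀ i : α, M.rk {i} ≤ 1) (t u : ℕ) :
    (Tset M t u).Finite :=
  (Dset_finite M hmat t u).subset (fun _ h => h.1)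

lemma ncard_prod {β γ : Type*} (A : Set β) (B : Set γ) :
    (A ×ˢ B).ncard = A.ncard * B.ncard := by
  rw [← Nat.card_coe_set_eq, ← Nat.card_coe_set_eq, ← Nat.card_coe_set_eq,
    Nat.card_congr (Equiv.Set.prod A B), Nat.card_prod]

lemma ncard_partition {β : Type*} {P : Set β} (hP : P.Finite) (f : β → Finset α) :
    P.ncard = ∑ S : Finset α, (P ∩ {y | f y = S}).ncard := by
  classical
  rw [Set.ncard_eq_toFinset_card P hP]
  rw [Finset.card_eq_sum_card_fiberwise (t := Finset.univ) (f := f)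
    (fun x _ => Finset.mem_univ _)]
  apply Finset.sum_congr rfl
  intro S _
  have hfin : (P ∩ {y | f y = S}).Finite := hP.subset Set.inter_subset_left
  rw [Set.ncard_eq_toFinset_card _ hfin]
  congr 1
  ext y
  simp [Set.Finite.mem_toFinset]

end Counting


section Counting2

open Finset

variable {α : Type*} [Fintype α] [DecidableEq α]

lemma TS_ncard (M : PolyMatroid α) (hmat : ∀ i : α, M.rk {i} ≤ 1) (t u : ℕ) (S : Finset α) :
    (Tset M t u ∩ {y | Finset.univ.filter (fun i => 1 ≤ y i) = S}).ncard =
      if M.rk Finset.univ ≤ t + M.rk S ∧ S.card ≤ u + M.rk S then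
        cnt S (u + M.rk S - S.card) * cnt Sᶜ (t + M.rk S - M.rk Finset.univ)
      else 0 := by
  classical
  have hrkcard := M.rk_le_card hmat S
  have hchar : ∀ y : α → ℤ,
      (y ∈ Tset M t u ∩ {y | Finset.univ.filter (fun i => 1 ≤ y i) = S}) ↔
      ((∀ i, i ∈ S ↔ 1 ≤ y i) ∧ (∑ i ∈ S, y i) = (M.rk S : ℤ) + u ∧
        (∑ i, y i) = (M.rk Finset.univ : ℤ) + u - t) := by
    intro y
    constructor
    · rintro ⟨⟨⟨hsum, hub⟩, htight⟩, hfil⟩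
      simp only [Set.mem_setOf_eq] at hfil
      rw [hfil] at htight
      refine ⟨?_, htight, hsum⟩
      intro i
      rw [← hfil]
      simp
    · rintro ⟨hiff, htight, hsum⟩
      have hfil : Finset.univ.filter (fun i => 1 ≤ y i) = S := by
        ext i
        simp [← hiff i]
      have hub : ∀ A : Finset α, (∑ i ∈ A, y i) ≤ (M.rk A : ℤ) + u := by
        intro A
        have := M.max_lemma hmat y A
        rw [hfil, htight] at this
        omega
      exact ⟨⟨⟨hsum, hub⟩, by rw [hfil, htight]⟩, by simpa [Set.mem_setOf_eq] using hfil⟩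
  by_cases hg : M.rk Finset.univ ≤ t + M.rk S ∧ S.card ≤ u + M.rk S
  · rw [if_pos hg]
    set m1 := u + M.rk S - S.card with hm1
    set m2 := t + M.rk S - M.rk Finset.univ with hm2
    set F : (α → ℕ) × (α → ℕ) → (α → ℤ) :=
      fun p i => if i ∈ S then (p.1 i : ℤ) + 1 else -(p.2 i : ℤ) with hF
    set W : Set ((α → ℕ) × (α → ℕ)) := (Aset S m1) ×ˢ (Aset Sᶜ m2) with hW
    have hm1' : (m1 : ℤ) = (u : ℤ) + M.rk S - S.card := by
      rw [hm1]; push_cast; omega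
    have hm2' : (m2 : ℤ) = (t : ℤ) + M.rk S - M.rk Finset.univ := by
      rw [hm2]; push_cast; omega
    have himg : F '' W = Tset M t u ∩ {y | Finset.univ.filter (fun i => 1 ≤ y i) = S} := by
      ext y
      constructor
      · rintro ⟨⟨a, b⟩, ⟨⟨ha1, ha2⟩, ⟨hb1, hb2⟩⟩, rfl⟩
        rw [hchar]
        have hSsum : (∑ i ∈ S, F (a, b) i) = (M.rk S : ℤ) + u := by
          have : ∀ i ∈ S, F (a, b) i = (a i : ℤ) + 1 := by
            intro i hi; simp [hF, hi]
          rw [Finset.sum_congr rfl this, Finset.sum_add_distrib]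
          have : (∑ i ∈ S, (a i : ℤ)) = (m1 : ℤ) := by
            rw [← ha2]; push_cast; ring
          rw [this]
          simp only [Finset.sum_const, nsmul_eq_mul, mul_one]
          rw [hm1']
          ring
        refine ⟨?_, hSsum, ?_⟩
        · intro i
          constructor
          · intro hi
            have h9 : F (a, b) i = (a i : ℤ) + 1 := by simp [hF, hi]
            rw [h9]
            have := Int.natCast_nonneg (a i)
            omega
          · intro hi
            by_contra hiS
            simp [hF, hiS] at hi
            omega
        · rw [← Finset.sum_add_sum_compl S]
          have hcsum : (∑ i ∈ Sᶜ, F (a, b) i) = -(m2 : ℤ) := by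
            have h5 : ∀ i ∈ Sᶜ, F (a, b) i = -(b i : ℤ) := by
              intro i hi
              simp only [Finset.mem_compl] at hi
              simp [hF, hi]
            rw [Finset.sum_congr rfl h5, Finset.sum_neg_distrib]
            congr 1
            rw [← hb2]; push_cast; ring
          rw [hSsum, hcsum, hm2']
          ring
      · intro hy
        rw [hchar] at hy
        obtain ⟨hiff, htight, hsum⟩ := hy
        set a : α → ℕ := fun i => if i ∈ S then (y i - 1).toNat else 0 with ha
        set b : α → ℕ := fun i => if i ∈ S then 0 else (-(y i)).toNat with hb
        have hyS : ∀ i ∈ S, (1 : ℤ) ≤ y i := fun i hi => (hiff i).mp hi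
        have hyc : ∀ i ∉ S, y i ≤ 0 := by
          intro i hi
          by_contra h
          exact hi ((hiff i).mpr (by omega))
        have haS : ∀ i ∈ S, (a i : ℤ) = y i - 1 := by
          intro i hi
          simp only [ha, if_pos hi]
          exact Int.toNat_of_nonneg (by have := hyS i hi; omega)
        have hbc : ∀ i ∈ Sᶜ, (b i : ℤ) = -(y i) := by
          intro i hi
          simp only [Finset.mem_compl] at hi
          simp only [hb, if_neg hi]
          exact Int.toNat_of_nonneg (by have := hyc i hi; omega)
        refine ⟨(a, b), ⟨⟨?_, ?_⟩, ⟨?_, ?_⟩⟩, ?_⟩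
        · intro i hi; simp [ha, hi]
        · have : ((∑ i ∈ S, a i : ℕ) : ℤ) = (m1 : ℤ) := by
            push_cast
            rw [Finset.sum_congr rfl haS, Finset.sum_sub_distrib, htight, hm1']
            simp only [Finset.sum_const, nsmul_eq_mul, mul_one]
            ring
          exact_mod_cast this
        · intro i hi
          simp only [Finset.mem_compl, not_not] at hi
          simp [hb, hi]
        · have : ((∑ i ∈ Sᶜ, b i : ℕ) : ℤ) = (m2 : ℤ) := by
            push_cast
            rw [Finset.sum_congr rfl hbc, Finset.sum_neg_distrib]
            have hcs : (∑ i ∈ Sᶜ, y i) = (∑ i, y i) - ∑ i ∈ S, y i := by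
              rw [← Finset.sum_add_sum_compl S y]; ring
            rw [hcs, hsum, htight, hm2']
            ring
          exact_mod_cast this
        · funext i
          by_cases hi : i ∈ S
          · simp only [hF, if_pos hi]
            rw [haS i hi]; ring
          · simp only [hF, if_neg hi]
            rw [hbc i (Finset.mem_compl.mpr hi)]; ring
    have hinj : Set.InjOn F W := by
      rintro ⟨a, b⟩ ⟨⟨ha1, _⟩, ⟨hb1, _⟩⟩ ⟨a', b'⟩ ⟨⟨ha1', _⟩, ⟨hb1', _⟩⟩ heq
      have heq' : ∀ i, F (a, b) i = F (a', b') i := fun i => congrFun heq i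
      have hae : a = a' := by
        funext i
        by_cases hi : i ∈ S
        · have := heq' i
          simp only [hF, if_pos hi] at this
          exact_mod_cast (by omega : (a i : ℤ) = a' i)
        · have := ha1 i hi; have := ha1' i hi; simp_all
      have hbe : b = b' := by
        funext i
        by_cases hi : i ∈ S
        · have := hb1 i (by simpa using hi); have := hb1' i (by simpa using hi); simp_all
        · have := heq' i
          simp only [hF, if_neg hi] at this
          exact_mod_cast (by omega : (b i : ℤ) = b' i)
      rw [Prod.ext_iff]; exact ⟨hae, hbe⟩
    rw [← himg, Set.ncard_image_of_injOn hinj, hW, ncard_prod]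
    rfl
  · rw [if_neg hg]
    have hempty : (Tset M t u ∩ {y | Finset.univ.filter (fun i => 1 ≤ y i) = S}) = ∅ := by
      ext y
      simp only [Set.mem_empty_iff_false, iff_false]
      intro hy
      rw [hchar y] at hy
      obtain ⟨hiff, htight, hsum⟩ := hy
      apply hg
      have hyS : (S.card : ℤ) ≤ ∑ i ∈ S, y i := by
        calc (S.card : ℤ) = ∑ _i ∈ S, (1 : ℤ) := by simp
          _ ≤ ∑ i ∈ S, y i := Finset.sum_le_sum (fun i hi => (hiff i).mp hi)
      have hyc : (∑ i ∈ Sᶜ, y i) ≤ 0 := by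
        apply Finset.sum_nonpos
        intro i hi
        simp only [Finset.mem_compl] at hi
        by_contra h
        exact hi ((hiff i).mpr (by omega))
      have hsplit : (∑ i ∈ S, y i) + (∑ i ∈ Sᶜ, y i) = ∑ i, y i :=
        Finset.sum_add_sum_compl S y
      constructor
      · push_cast at *; omega
      · push_cast at *; omega
    rw [hempty, Set.ncard_empty]

end Counting2


section Counting3

open Finset

variable {α : Type*} [Fintype α] [DecidableEq α]

lemma Tset_ncard (M : PolyMatroid α) (hmat : ∀ i : α, M.rk {i} ≤ 1) (t u : ℕ) :
    (Tset M t u).ncard = ∑ S : Finset α,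
      (if M.rk Finset.univ ≤ t + M.rk S ∧ S.card ≤ u + M.rk S then
        cnt S (u + M.rk S - S.card) * cnt Sᶜ (t + M.rk S - M.rk Finset.univ) else 0) := by
  rw [ncard_partition (Tset_finite M hmat t u) (fun y => Finset.univ.filter (fun i => 1 ≤ y i))]
  exact Finset.sum_congr rfl (fun S _ => TS_ncard M hmat t u S)

lemma Dset_ncard_split (M : PolyMatroid α) (hmat : ∀ i : α, M.rk {i} ≤ 1) (t u : ℕ) :
    (Dset M (t+1) (u+1)).ncard = (Dset M t u).ncard + (Tset M (t+1) (u+1)).ncard := by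
  have heq : Dset M (t+1) (u+1) = Dset M t u ∪ Tset M (t+1) (u+1) := by
    ext y
    simp only [Set.mem_union]
    constructor
    · intro hy
      obtain ⟨hsum, hub⟩ := hy
      set S := Finset.univ.filter (fun i => 1 ≤ y i) with hS
      by_cases htight : (∑ i ∈ S, y i) = (M.rk S : ℤ) + (u+1)
      · right
        refine ⟨⟨hsum, hub⟩, ?_⟩
        rw [← hS]
        push_cast at htight ⊢
        omega
      · left
        have hubS := hub S
        push_cast at hubS htight
        constructor
        · push_cast at hsum ⊢
          omega
        · intro A
          have hml := M.max_lemma hmat y A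
          rw [← hS] at hml
          push_cast
          omega
    · rintro (⟨hsum, hub⟩ | hy)
      · constructor
        · push_cast at hsum ⊢; omega
        · intro A
          have := hub A
          push_cast at this ⊢
          omega
      · exact hy.1
  have hdisj : Disjoint (Dset M t u) (Tset M (t+1) (u+1)) := by
    rw [Set.disjoint_left]
    rintro y ⟨_, hub⟩ ⟨_, htight⟩
    have := hub (Finset.univ.filter (fun i => 1 ≤ y i))
    push_cast at this htight
    omega
  rw [heq, Set.ncard_union_eq hdisj (Dset_finite M hmat t u) (Tset_finite M hmat _ _)]

lemma Dset_eq_Tset_of (M : PolyMatroid α) (hmat : ∀ i : α, M.rk {i} ≤ 1) (t u : ℕ)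
    (h : t = 0 ∨ u = 0) : Dset M t u = Tset M t u := by
  ext y
  constructor
  · rintro ⟨hsum, hub⟩
    refine ⟨⟨hsum, hub⟩, ?_⟩
    set S := Finset.univ.filter (fun i => 1 ≤ y i) with hS
    have hubS := hub S
    rcases h with h | h
    · subst h
      have hml := M.max_lemma hmat y Finset.univ
      rw [← hS] at hml
      rw [hsum] at hml
      push_cast at *
      omega
    · subst h
      have hcard : (S.card : ℤ) ≤ ∑ i ∈ S, y i := by
        calc (S.card : ℤ) = ∑ _i ∈ S, (1 : ℤ) := by simp
          _ ≤ ∑ i ∈ S, y i := Finset.sum_le_sum (fun i hi => by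
              simp only [hS, Finset.mem_filter] at hi; exact hi.2)
      have hrk := M.rk_le_card hmat S
      push_cast at *
      omega
  · exact fun hy => hy.1

lemma Qcount_eq [Nonempty α] (M : PolyMatroid α) (hmat : ∀ i : α, M.rk {i} ≤ 1) (t u : ℕ) :
    Qcount (matroidPolytope M) t u = (Dset M t u).ncard := by
  unfold Qcount latticeCount
  congr 1
  ext q
  rw [Set.mem_setOf_eq]
  exact mem_polytope_sum_iff M hmat t u q

lemma key_count [Nonempty α] (M : PolyMatroid α) (hmat : ∀ i : α, M.rk {i} ≤ 1) (t u : ℕ) :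
    Qcount (matroidPolytope M) t u =
      (if 1 ≤ t ∧ 1 ≤ u then Qcount (matroidPolytope M) (t-1) (u-1) else 0) +
      ∑ S : Finset α, (if M.rk Finset.univ ≤ t + M.rk S ∧ S.card ≤ u + M.rk S then
        cnt S (u + M.rk S - S.card) * cnt Sᶜ (t + M.rk S - M.rk Finset.univ) else 0) := by
  by_cases h : 1 ≤ t ∧ 1 ≤ u
  · obtain ⟨t', rfl⟩ : ∃ t', t = t' + 1 := ⟨t-1, by omega⟩
    obtain ⟨u', rfl⟩ : ∃ u', u = u' + 1 := ⟨u-1, by omega⟩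
    rw [if_pos h]
    rw [Qcount_eq M hmat, Qcount_eq M hmat, Dset_ncard_split M hmat t' u',
      Tset_ncard M hmat]
    simp only [Nat.add_sub_cancel]
  · rw [if_neg h, Qcount_eq M hmat,
      Dset_eq_Tset_of M hmat t u (by omega), Tset_ncard M hmat, zero_add]

end Counting3


section Series

open MvPowerSeries

variable {α : Type*} [Fintype α] [DecidableEq α]

lemma ncard_partition' {β : Type*} {P : Set β} (hP : P.Finite) (f : β → ℕ) (n : ℕ)
    (hf : ∀ y ∈ P, f y < n) :
    P.ncard = ∑ j ∈ Finset.range n, (P ∩ {y | f y = j}).ncard := by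
  classical
  rw [Set.ncard_eq_toFinset_card P hP]
  rw [Finset.card_eq_sum_card_fiberwise (t := Finset.range n) (f := f)
    (fun x hx => Finset.mem_range.mpr (hf x ((Set.Finite.mem_toFinset hP).mp hx)))]
  apply Finset.sum_congr rfl
  intro j _
  have hfin : (P ∩ {y | f y = j}).Finite := hP.subset Set.inter_subset_left
  rw [Set.ncard_eq_toFinset_card _ hfin]
  congr 1
  ext y
  simp [Set.Finite.mem_toFinset]

lemma cnt_empty (m : ℕ) : cnt (∅ : Finset α) m = if m = 0 then 1 else 0 := by
  unfold cnt Aset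
  rcases Nat.eq_zero_or_pos m with hm | hm
  · subst hm
    rw [if_pos rfl]
    have : {a : α → ℕ | (∀ i ∉ (∅ : Finset α), a i = 0) ∧ (∑ i ∈ (∅ : Finset α), a i) = 0}
        = {fun _ => 0} := by
      ext a
      simp only [Set.mem_setOf_eq, Set.mem_singleton_iff]
      constructor
      · rintro ⟨h, _⟩
        funext k
        exact h k (Finset.notMem_empty k)
      · rintro rfl
        exact ⟨fun _ _ => rfl, Finset.sum_empty⟩
    rw [this, Set.ncard_singleton]
  · rw [if_neg (by omega)]
    have : {a : α → ℕ | (∀ i ∉ (∅ : Finset α), a i = 0) ∧ (∑ i ∈ (∅ : Finset α), a i) = m}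
        = ∅ := by
      ext a
      simp only [Finset.sum_empty, Set.mem_setOf_eq, Set.mem_empty_iff_false, iff_false]
      rintro ⟨_, h⟩; omega
    rw [this, Set.ncard_empty]

lemma cnt_insert {i : α} {S : Finset α} (hi : i ∉ S) (m : ℕ) :
    cnt (insert i S) m = ∑ j ∈ Finset.range (m+1), cnt S (m - j) := by
  classical
  unfold cnt
  have hlt : ∀ a ∈ Aset (insert i S) m, (fun a : α → ℕ => a i) a < m + 1 := by
    rintro a ⟨h1, h2⟩
    have h3 : a i ≤ ∑ k ∈ insert i S, a k :=
      Finset.single_le_sum (fun k _ => Nat.zero_le (a k)) (Finset.mem_insert_self i S)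
    simp only []
    omega
  rw [ncard_partition' (Aset_finite _ _) (fun a => a i) (m+1) hlt]
  apply Finset.sum_congr rfl
  intro j hj
  rw [Finset.mem_range] at hj
  set F : (α → ℕ) → (α → ℕ) := fun a => Function.update a i j with hFdef
  have himg : F '' Aset S (m - j) = Aset (insert i S) m ∩ {a | a i = j} := by
    ext a
    constructor
    · rintro ⟨a0, ⟨h1, h2⟩, rfl⟩
      have hupd : ∀ k ∈ S, F a0 k = a0 k := by
        intro k hk
        exact Function.update_of_ne (ne_of_mem_of_not_mem hk hi) j a0
      refine ⟨⟨?_, ?_⟩, ?_⟩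
      · intro k hk
        have hki : k ≠ i := fun h => hk (h ▸ Finset.mem_insert_self i S)
        have hkS : k ∉ S := fun h => hk (Finset.mem_insert_of_mem h)
        rw [hFdef]
        simp only [Function.update_of_ne hki]
        exact h1 k hkS
      · rw [Finset.sum_insert hi]
        rw [Finset.sum_congr rfl hupd, h2]
        simp only [hFdef, Function.update_self]
        omega
      · simp [hFdef, Function.update_self]
    · rintro ⟨⟨h1, h2⟩, h3⟩
      simp only [Set.mem_setOf_eq] at h3
      refine ⟨Function.update a i 0, ⟨?_, ?_⟩, ?_⟩
      · intro k hk
        by_cases hki : k = i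
        · subst hki; simp
        · rw [Function.update_of_ne hki]
          exact h1 k (fun h => hk (Finset.mem_of_mem_insert_of_ne h hki))
      · have h5 : (∑ k ∈ insert i S, a k) = a i + ∑ k ∈ S, a k := Finset.sum_insert hi
        have h3' : a i = j := h3
        have h4 : ∀ k ∈ S, Function.update a i 0 k = a k := by
          intro k hk
          exact Function.update_of_ne (ne_of_mem_of_not_mem hk hi) 0 a
        rw [Finset.sum_congr rfl h4]
        show (∑ k ∈ S, a k) = m - j
        omega
      · funext k
        by_cases hki : k = i
        · subst hki; simp [hFdef, h3]
        · simp [hFdef, Function.update_of_ne hki]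
  have hinj : Set.InjOn F (Aset S (m - j)) := by
    rintro a ⟨ha1, _⟩ a' ⟨ha1', _⟩ heq
    funext k
    by_cases hki : k = i
    · rw [hki, ha1 i hi, ha1' i hi]
    · have := congrFun heq k
      simpa [hFdef, Function.update_of_ne hki] using this
  rw [← himg, Set.ncard_image_of_injOn hinj]

/-- Geometric series `∑ k, X0^k`. -/
def geo0 : MvPowerSeries (Fin 2) ℤ := fun d => if d 1 = 0 then 1 else 0

/-- Geometric series `∑ k, X1^k`. -/
def geo1 : MvPowerSeries (Fin 2) ℤ := fun d => if d 0 = 0 then 1 else 0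

def ee (p q : ℕ) : Fin 2 →₀ ℕ := Finsupp.single 0 p + Finsupp.single 1 q

@[simp] lemma ee_apply0 (p q : ℕ) : ee p q 0 = p := by
  simp [ee, Finsupp.single_apply]

@[simp] lemma ee_apply1 (p q : ℕ) : ee p q 1 = q := by
  simp [ee, Finsupp.single_apply]

lemma eq_ee (d : Fin 2 →₀ ℕ) : d = ee (d 0) (d 1) := by
  ext i
  fin_cases i
  · simp
  · simp

lemma ee_le_iff (p q : ℕ) (d : Fin 2 →₀ ℕ) : ee p q ≤ d ↔ p ≤ d 0 ∧ q ≤ d 1 := by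
  rw [Finsupp.le_def]
  constructor
  · intro h
    exact ⟨by simpa using h 0, by simpa using h 1⟩
  · rintro ⟨h0, h1⟩ i
    fin_cases i
    · simpa using h0
    · simpa using h1

lemma coeff_geo0 (d : Fin 2 →₀ ℕ) :
    MvPowerSeries.coeff d geo0 = if d 1 = 0 then 1 else 0 := rfl

lemma coeff_geo1 (d : Fin 2 →₀ ℕ) :
    MvPowerSeries.coeff d geo1 = if d 0 = 0 then 1 else 0 := rfl

lemma one_sub_X0_mul_geo0 : (1 - MvPowerSeries.X 0) * geo0 = 1 := by
  ext d
  rw [sub_mul, one_mul, map_sub, MvPowerSeries.coeff_one]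
  have hX : (MvPowerSeries.X 0 : MvPowerSeries (Fin 2) ℤ) =
      MvPowerSeries.monomial (Finsupp.single 0 1) 1 := rfl
  rw [hX, MvPowerSeries.coeff_monomial_mul, coeff_geo0]
  have hle : (Finsupp.single (0 : Fin 2) 1 ≤ d) ↔ 1 ≤ d 0 := by
    have : Finsupp.single (0 : Fin 2) 1 = ee 1 0 := by simp [ee]
    rw [this, ee_le_iff]
    omega
  have hsub : ((d - Finsupp.single (0 : Fin 2) 1 : Fin 2 →₀ ℕ)) 1 = d 1 := by
    rw [Finsupp.tsub_apply]
    simp [Finsupp.single_apply]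
  have hzero : (d = 0) ↔ (d 0 = 0 ∧ d 1 = 0) := by
    constructor
    · rintro rfl; simp
    · rintro ⟨h0, h1⟩
      ext i
      fin_cases i <;> simpa
  by_cases h0 : 1 ≤ d 0
  · rw [if_pos (hle.mpr h0), one_mul, coeff_geo0, hsub]
    have : ¬ (d = 0) := fun h => by rw [hzero] at h; omega
    rw [if_neg this]
    ring
  · rw [if_neg (fun h => h0 (hle.mp h))]
    by_cases h1 : d 1 = 0
    · rw [if_pos h1, if_pos (hzero.mpr ⟨by omega, h1⟩)]
      ring
    · rw [if_neg h1, if_neg (fun h => h1 (hzero.mp h).2)]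
      ring

lemma one_sub_X1_mul_geo1 : (1 - MvPowerSeries.X 1) * geo1 = 1 := by
  ext d
  rw [sub_mul, one_mul, map_sub, MvPowerSeries.coeff_one]
  have hX : (MvPowerSeries.X 1 : MvPowerSeries (Fin 2) ℤ) =
      MvPowerSeries.monomial (Finsupp.single 1 1) 1 := rfl
  rw [hX, MvPowerSeries.coeff_monomial_mul, coeff_geo1]
  have hle : (Finsupp.single (1 : Fin 2) 1 ≤ d) ↔ 1 ≤ d 1 := by
    have : Finsupp.single (1 : Fin 2) 1 = ee 0 1 := by simp [ee]
    rw [this, ee_le_iff]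
    omega
  have hsub : ((d - Finsupp.single (1 : Fin 2) 1 : Fin 2 →₀ ℕ)) 0 = d 0 := by
    rw [Finsupp.tsub_apply]
    simp [Finsupp.single_apply]
  have hzero : (d = 0) ↔ (d 0 = 0 ∧ d 1 = 0) := by
    constructor
    · rintro rfl; simp
    · rintro ⟨h0, h1⟩
      ext i
      fin_cases i <;> simpa
  by_cases h1 : 1 ≤ d 1
  · rw [if_pos (hle.mpr h1), one_mul, coeff_geo1, hsub]
    have : ¬ (d = 0) := fun h => by rw [hzero] at h; omega
    rw [if_neg this]
    ring
  · rw [if_neg (fun h => h1 (hle.mp h))]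
    by_cases h0 : d 0 = 0
    · rw [if_pos h0, if_pos (hzero.mpr ⟨h0, by omega⟩)]
      ring
    · rw [if_neg h0, if_neg (fun h => h0 (hzero.mp h).1)]
      ring

end Series


section Series2

open MvPowerSeries

variable {α : Type*} [Fintype α] [DecidableEq α]

lemma ee_add (a b c e : ℕ) : ee a b + ee c e = ee (a + c) (b + e) := by
  ext i
  fin_cases i <;> simp [Finsupp.add_apply]

lemma eq_ee0 (p : Fin 2 →₀ ℕ) (h : p 1 = 0) : p = ee (p 0) 0 := by
  ext i
  fin_cases i
  · simp
  · simpa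

lemma eq_ee1 (p : Fin 2 →₀ ℕ) (h : p 0 = 0) : p = ee 0 (p 1) := by
  ext i
  fin_cases i
  · simpa
  · simp

lemma coeff_geo0_pow (S : Finset α) (d : Fin 2 →₀ ℕ) :
    MvPowerSeries.coeff d (geo0 ^ S.card) = if d 1 = 0 then (cnt S (d 0) : ℤ) else 0 := by
  classical
  induction S using Finset.induction generalizing d with
  | empty =>
    simp only [Finset.card_empty, pow_zero, MvPowerSeries.coeff_one]
    by_cases h1 : d 1 = 0
    · by_cases h0 : d 0 = 0
      · have hd : d = 0 := by
          ext i; fin_cases i <;> simpa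
        rw [if_pos hd, if_pos h1, h0, cnt_empty, if_pos rfl]
        norm_num
      · have hd : d ≠ 0 := fun h => h0 (by rw [h]; simp)
        rw [if_neg hd, if_pos h1, cnt_empty, if_neg h0]
        norm_num
    · have hd : d ≠ 0 := fun h => h1 (by rw [h]; simp)
      rw [if_neg hd, if_neg h1]
  | @insert i S hiS IH =>
    rw [Finset.card_insert_of_notMem hiS, pow_succ, MvPowerSeries.coeff_mul]
    by_cases h1 : d 1 = 0
    · rw [if_pos h1, cnt_insert hiS (d 0)]
      push_cast
      refine Finset.sum_nbij' (i := fun pq : (Fin 2 →₀ ℕ) × (Fin 2 →₀ ℕ) => pq.2 0)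
        (j := fun k => (ee (d 0 - k) 0, ee k 0)) ?_ ?_ ?_ ?_ ?_
      · rintro ⟨p, q⟩ hpq
        rw [Finset.HasAntidiagonal.mem_antidiagonal] at hpq
        have h0 : p 0 + q 0 = d 0 := by
          rw [← Finsupp.add_apply, hpq]
        simp only [Finset.mem_range]
        omega
      · intro k hk
        rw [Finset.mem_range] at hk
        rw [Finset.HasAntidiagonal.mem_antidiagonal, ee_add]
        have h2 : d 0 - k + k = d 0 := by omega
        rw [h2, zero_add, ← h1]
        exact (eq_ee d).symm
      · rintro ⟨p, q⟩ hpq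
        rw [Finset.HasAntidiagonal.mem_antidiagonal] at hpq
        have h0 : p 0 + q 0 = d 0 := by rw [← Finsupp.add_apply, hpq]
        have h1' : p 1 + q 1 = d 1 := by rw [← Finsupp.add_apply, hpq]
        have hp1 : p 1 = 0 := by omega
        have hq1 : q 1 = 0 := by omega
        have hp : p = ee (d 0 - q 0) 0 := by
          rw [eq_ee0 p hp1]
          congr 1
          omega
        have hq : q = ee (q 0) 0 := eq_ee0 q hq1
        simp only [Prod.mk.injEq]
        exact ⟨hp.symm, hq.symm⟩
      · intro k _
        simp
      · rintro ⟨p, q⟩ hpq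
        rw [Finset.HasAntidiagonal.mem_antidiagonal] at hpq
        have h0 : p 0 + q 0 = d 0 := by rw [← Finsupp.add_apply, hpq]
        have h1' : p 1 + q 1 = d 1 := by rw [← Finsupp.add_apply, hpq]
        have hp1 : p 1 = 0 := by omega
        have hq1 : q 1 = 0 := by omega
        rw [IH p, if_pos hp1, coeff_geo0, if_pos hq1]
        have : p 0 = d 0 - q 0 := by omega
        rw [this]
        push_cast
        ring
    · rw [if_neg h1]
      apply Finset.sum_eq_zero
      rintro ⟨p, q⟩ hpq
      rw [Finset.HasAntidiagonal.mem_antidiagonal] at hpq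
      have h1' : p 1 + q 1 = d 1 := by rw [← Finsupp.add_apply, hpq]
      by_cases hq1 : q 1 = 0
      · have hp1 : p 1 ≠ 0 := by omega
        rw [IH p, if_neg hp1, zero_mul]
      · rw [coeff_geo0, if_neg hq1, mul_zero]

lemma coeff_geo1_pow (S : Finset α) (d : Fin 2 →₀ ℕ) :
    MvPowerSeries.coeff d (geo1 ^ S.card) = if d 0 = 0 then (cnt S (d 1) : ℤ) else 0 := by
  classical
  induction S using Finset.induction generalizing d with
  | empty =>
    simp only [Finset.card_empty, pow_zero, MvPowerSeries.coeff_one]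
    by_cases h0 : d 0 = 0
    · by_cases h1 : d 1 = 0
      · have hd : d = 0 := by
          ext i; fin_cases i <;> simpa
        rw [if_pos hd, if_pos h0, h1, cnt_empty, if_pos rfl]
        norm_num
      · have hd : d ≠ 0 := fun h => h1 (by rw [h]; simp)
        rw [if_neg hd, if_pos h0, cnt_empty, if_neg h1]
        norm_num
    · have hd : d ≠ 0 := fun h => h0 (by rw [h]; simp)
      rw [if_neg hd, if_neg h0]
  | @insert i S hiS IH =>
    rw [Finset.card_insert_of_notMem hiS, pow_succ, MvPowerSeries.coeff_mul]
    by_cases h0 : d 0 = 0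
    · rw [if_pos h0, cnt_insert hiS (d 1)]
      push_cast
      refine Finset.sum_nbij' (i := fun pq : (Fin 2 →₀ ℕ) × (Fin 2 →₀ ℕ) => pq.2 1)
        (j := fun k => (ee 0 (d 1 - k), ee 0 k)) ?_ ?_ ?_ ?_ ?_
      · rintro ⟨p, q⟩ hpq
        rw [Finset.HasAntidiagonal.mem_antidiagonal] at hpq
        have h1 : p 1 + q 1 = d 1 := by
          rw [← Finsupp.add_apply, hpq]
        simp only [Finset.mem_range]
        omega
      · intro k hk
        rw [Finset.mem_range] at hk
        rw [Finset.HasAntidiagonal.mem_antidiagonal, ee_add]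
        have h2 : d 1 - k + k = d 1 := by omega
        rw [zero_add, h2]
        exact (eq_ee1 d h0).symm
      · rintro ⟨p, q⟩ hpq
        rw [Finset.HasAntidiagonal.mem_antidiagonal] at hpq
        have h1 : p 1 + q 1 = d 1 := by rw [← Finsupp.add_apply, hpq]
        have h0' : p 0 + q 0 = d 0 := by rw [← Finsupp.add_apply, hpq]
        have hp0 : p 0 = 0 := by omega
        have hq0 : q 0 = 0 := by omega
        have hp : p = ee 0 (d 1 - q 1) := by
          rw [eq_ee1 p hp0]
          congr 1
          omega
        have hq : q = ee 0 (q 1) := eq_ee1 q hq0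
        simp only [Prod.mk.injEq]
        exact ⟨hp.symm, hq.symm⟩
      · intro k _
        simp
      · rintro ⟨p, q⟩ hpq
        rw [Finset.HasAntidiagonal.mem_antidiagonal] at hpq
        have h1 : p 1 + q 1 = d 1 := by rw [← Finsupp.add_apply, hpq]
        have h0' : p 0 + q 0 = d 0 := by rw [← Finsupp.add_apply, hpq]
        have hp0 : p 0 = 0 := by omega
        have hq0 : q 0 = 0 := by omega
        rw [IH p, if_pos hp0, coeff_geo1, if_pos hq0]
        have : p 1 = d 1 - q 1 := by omega
        rw [this]
        push_cast
        ring
    · rw [if_neg h0]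
      apply Finset.sum_eq_zero
      rintro ⟨p, q⟩ hpq
      rw [Finset.HasAntidiagonal.mem_antidiagonal] at hpq
      have h0' : p 0 + q 0 = d 0 := by rw [← Finsupp.add_apply, hpq]
      by_cases hq0 : q 0 = 0
      · have hp0 : p 0 ≠ 0 := by omega
        rw [IH p, if_neg hp0, zero_mul]
      · rw [coeff_geo1, if_neg hq0, mul_zero]

lemma coeff_geoprod (S T : Finset α) (d : Fin 2 →₀ ℕ) :
    MvPowerSeries.coeff d (geo0 ^ S.card * geo1 ^ T.card) =
      (cnt S (d 0) * cnt T (d 1) : ℤ) := by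
  classical
  rw [MvPowerSeries.coeff_mul]
  rw [Finset.sum_eq_single_of_mem (ee (d 0) 0, ee 0 (d 1))]
  · rw [coeff_geo0_pow, coeff_geo1_pow]
    simp
  · rw [Finset.HasAntidiagonal.mem_antidiagonal, ee_add]
    simp [← eq_ee d]
  · rintro ⟨p, q⟩ hpq hne
    rw [Finset.HasAntidiagonal.mem_antidiagonal] at hpq
    have h0 : p 0 + q 0 = d 0 := by rw [← Finsupp.add_apply, hpq]
    have h1 : p 1 + q 1 = d 1 := by rw [← Finsupp.add_apply, hpq]
    rw [coeff_geo0_pow, coeff_geo1_pow]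
    by_cases hp1 : p 1 = 0
    · by_cases hq0 : q 0 = 0
      · exfalso
        apply hne
        have hp : p = ee (d 0) 0 := by
          rw [eq_ee0 p hp1]
          congr 1
          omega
        have hq : q = ee 0 (d 1) := by
          rw [eq_ee1 q hq0]
          congr 1
          omega
        rw [hp, hq]
      · rw [if_neg hq0, mul_zero]
    · rw [if_neg hp1, zero_mul]

end Series2


section Final

open MvPowerSeries

variable {α : Type*} [Fintype α] [DecidableEq α]

lemma dagger [Nonempty α] (M : PolyMatroid α) (hmat : ∀ i : α, M.rk {i} ≤ 1)
    (F : MvPowerSeries (Fin 2) ℤ)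
    (hF : ∀ d : Fin 2 →₀ ℕ,
      MvPowerSeries.coeff d F = (Qcount (matroidPolytope M) (d 0) (d 1) : ℤ)) :
    (1 - MvPowerSeries.X 0 * MvPowerSeries.X 1) * F =
      ∑ S : Finset α,
        (MvPowerSeries.X 0 : MvPowerSeries (Fin 2) ℤ) ^ (M.rk Finset.univ - M.rk S) *
          MvPowerSeries.X 1 ^ (S.card - M.rk S) * (geo0 ^ (Sᶜ.card) * geo1 ^ S.card) := by
  classical
  ext d
  rw [sub_mul, one_mul, map_sub]
  have hX01 : (MvPowerSeries.X 0 * MvPowerSeries.X 1 : MvPowerSeries (Fin 2) ℤ) =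
      MvPowerSeries.monomial (ee 1 1) 1 := by
    rw [show (MvPowerSeries.X 0 : MvPowerSeries (Fin 2) ℤ) =
        MvPowerSeries.monomial (Finsupp.single 0 1) 1 from rfl,
      show (MvPowerSeries.X 1 : MvPowerSeries (Fin 2) ℤ) =
        MvPowerSeries.monomial (Finsupp.single 1 1) 1 from rfl,
      MvPowerSeries.monomial_mul_monomial, one_mul]
    rfl
  rw [hX01, MvPowerSeries.coeff_monomial_mul, hF d, map_sum]
  have hRHS : ∀ S : Finset α,
      MvPowerSeries.coeff d (MvPowerSeries.X 0 ^ (M.rk Finset.univ - M.rk S) *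
        MvPowerSeries.X 1 ^ (S.card - M.rk S) * (geo0 ^ (Sᶜ.card) * geo1 ^ S.card)) =
      if M.rk Finset.univ ≤ d 0 + M.rk S ∧ S.card ≤ d 1 + M.rk S then
        (cnt S (d 1 + M.rk S - S.card) * cnt Sᶜ (d 0 + M.rk S - M.rk Finset.univ) : ℤ)
      else 0 := by
    intro S
    set p := M.rk Finset.univ - M.rk S with hp
    set q := S.card - M.rk S with hq
    have hrS : M.rk S ≤ M.rk Finset.univ := M.rk_mono (Finset.subset_univ S)
    have hcS : M.rk S ≤ S.card := M.rk_le_card hmat S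
    have hXX : (MvPowerSeries.X 0 ^ p * MvPowerSeries.X 1 ^ q :
        MvPowerSeries (Fin 2) ℤ) = MvPowerSeries.monomial (ee p q) 1 := by
      rw [MvPowerSeries.X_pow_eq, MvPowerSeries.X_pow_eq,
        MvPowerSeries.monomial_mul_monomial, one_mul]
      rfl
    rw [hXX, MvPowerSeries.coeff_monomial_mul]
    by_cases hg : M.rk Finset.univ ≤ d 0 + M.rk S ∧ S.card ≤ d 1 + M.rk S
    · have hle : ee p q ≤ d := by
        rw [ee_le_iff]
        constructor <;> omega
      rw [if_pos hle, if_pos hg, one_mul, coeff_geoprod]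
      have e0 : ((d - ee p q : Fin 2 →₀ ℕ)) 0 = d 0 + M.rk S - M.rk Finset.univ := by
        rw [Finsupp.tsub_apply, ee_apply0]
        omega
      have e1 : ((d - ee p q : Fin 2 →₀ ℕ)) 1 = d 1 + M.rk S - S.card := by
        rw [Finsupp.tsub_apply, ee_apply1]
        omega
      rw [e0, e1]
      ring
    · have hle : ¬ (ee p q ≤ d) := by
        rw [ee_le_iff]
        omega
      rw [if_neg hle, if_neg hg]
  rw [Finset.sum_congr rfl (fun S _ => hRHS S)]
  have hkc := key_count M hmat (d 0) (d 1)
  have hkcZ : ((Qcount (matroidPolytope M) (d 0) (d 1) : ℕ) : ℤ) =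
      (if 1 ≤ d 0 ∧ 1 ≤ d 1 then
        ((Qcount (matroidPolytope M) (d 0 - 1) (d 1 - 1) : ℕ) : ℤ) else 0) +
      ∑ S : Finset α, (if M.rk Finset.univ ≤ d 0 + M.rk S ∧ S.card ≤ d 1 + M.rk S then
        (cnt S (d 1 + M.rk S - S.card) * cnt Sᶜ (d 0 + M.rk S - M.rk Finset.univ) : ℤ)
      else 0) := by
    rw [hkc]
    push_cast
    rfl

  have hguard : (ee 1 1 ≤ d) ↔ (1 ≤ d 0 ∧ 1 ≤ d 1) := ee_le_iff 1 1 d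
  by_cases hg : 1 ≤ d 0 ∧ 1 ≤ d 1
  · rw [if_pos (hguard.mpr hg), one_mul, hF]
    have e0 : ((d - ee 1 1 : Fin 2 →₀ ℕ)) 0 = d 0 - 1 := by
      rw [Finsupp.tsub_apply, ee_apply0]
    have e1 : ((d - ee 1 1 : Fin 2 →₀ ℕ)) 1 = d 1 - 1 := by
      rw [Finsupp.tsub_apply, ee_apply1]
    rw [e0, e1]
    rw [if_pos hg] at hkcZ
    linarith
  · rw [if_neg (fun h => hg (hguard.mp h)), sub_zero]
    rw [if_neg hg, zero_add] at hkcZ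
    exact hkcZ

end Final


/-- The denominator-cleared power series identity relating the
generating function `Σ_{t,u} Q_M(t,u) v^t w^u` to the Tutte polynomial:
`(1−vw)(1−v)^n(1−w)^n Σ Q_M(t,u) v^t w^u
  = Σ_{S ⊆ E} v^{r(M)−r(S)} w^{|S|−r(S)} (1−v)^{|S|} (1−w)^{n−|S|}`
in `ℤ[[v,w]]`. -/
theorem stmt_0 {α : Type*} [Fintype α] [DecidableEq α] [Nonempty α]
    (M : PolyMatroid α) (hmat : ∀ i : α, M.rk {i} ≤ 1)
    (F : MvPowerSeries (Fin 2) ℤ)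
    (hF : ∀ d : Fin 2 →₀ ℕ,
      MvPowerSeries.coeff d F = (Qcount (matroidPolytope M) (d 0) (d 1) : ℤ)) :
    (1 - MvPowerSeries.X 0 * MvPowerSeries.X 1) *
        (1 - MvPowerSeries.X 0) ^ (Fintype.card α) *
        (1 - MvPowerSeries.X 1) ^ (Fintype.card α) * F =
      ∑ S : Finset α,
        (MvPowerSeries.X 0 : MvPowerSeries (Fin 2) ℤ) ^ (M.rk Finset.univ - M.rk S) *
          MvPowerSeries.X 1 ^ (S.card - M.rk S) *
          (1 - MvPowerSeries.X 0) ^ S.card *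
          (1 - MvPowerSeries.X 1) ^ (Fintype.card α - S.card) := by
  classical
  have hd := dagger M hmat F hF
  set n := Fintype.card α with hn
  calc (1 - MvPowerSeries.X 0 * MvPowerSeries.X 1) * (1 - MvPowerSeries.X 0) ^ n *
        (1 - MvPowerSeries.X 1) ^ n * F
      = (1 - MvPowerSeries.X 0) ^ n * (1 - MvPowerSeries.X 1) ^ n *
          ((1 - MvPowerSeries.X 0 * MvPowerSeries.X 1) * F) := by ring
    _ = (1 - MvPowerSeries.X 0) ^ n * (1 - MvPowerSeries.X 1) ^ n *
          ∑ S : Finset α,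
            (MvPowerSeries.X 0 : MvPowerSeries (Fin 2) ℤ) ^ (M.rk Finset.univ - M.rk S) *
              MvPowerSeries.X 1 ^ (S.card - M.rk S) * (geo0 ^ (Sᶜ.card) * geo1 ^ S.card) := by
        rw [hd]
    _ = ∑ S : Finset α,
        (MvPowerSeries.X 0 : MvPowerSeries (Fin 2) ℤ) ^ (M.rk Finset.univ - M.rk S) *
          MvPowerSeries.X 1 ^ (S.card - M.rk S) *
          (1 - MvPowerSeries.X 0) ^ S.card *
          (1 - MvPowerSeries.X 1) ^ (n - S.card) := by
        rw [Finset.mul_sum]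
        apply Finset.sum_congr rfl
        intro S _
        have hcc : S.card + Sᶜ.card = n := Finset.card_add_card_compl S
        have h2 : n - S.card = Sᶜ.card := by omega
        have h0 : ((1 - MvPowerSeries.X 0 : MvPowerSeries (Fin 2) ℤ)) ^ n =
            (1 - MvPowerSeries.X 0) ^ (S.card) * (1 - MvPowerSeries.X 0) ^ (Sᶜ.card) := by
          rw [← pow_add, hcc]
        have h1 : ((1 - MvPowerSeries.X 1 : MvPowerSeries (Fin 2) ℤ)) ^ n =
            (1 - MvPowerSeries.X 1) ^ (Sᶜ.card) * (1 - MvPowerSeries.X 1) ^ (S.card) := by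
          rw [← pow_add]
          congr 1
          omega
        rw [h2, h0, h1]
        have g0 : ((1 - MvPowerSeries.X 0) * geo0 : MvPowerSeries (Fin 2) ℤ) ^ (Sᶜ.card) = 1 := by
          rw [one_sub_X0_mul_geo0, one_pow]
        have g1 : ((1 - MvPowerSeries.X 1) * geo1 : MvPowerSeries (Fin 2) ℤ) ^ (S.card) = 1 := by
          rw [one_sub_X1_mul_geo1, one_pow]
        calc (1 - MvPowerSeries.X 0) ^ S.card * (1 - MvPowerSeries.X 0) ^ Sᶜ.card *
              ((1 - MvPowerSeries.X 1) ^ Sᶜ.card * (1 - MvPowerSeries.X 1) ^ S.card) *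
              ((MvPowerSeries.X 0 : MvPowerSeries (Fin 2) ℤ) ^ (M.rk Finset.univ - M.rk S) *
                MvPowerSeries.X 1 ^ (S.card - M.rk S) * (geo0 ^ (Sᶜ.card) * geo1 ^ S.card))
            = ((MvPowerSeries.X 0 : MvPowerSeries (Fin 2) ℤ) ^ (M.rk Finset.univ - M.rk S) *
                MvPowerSeries.X 1 ^ (S.card - M.rk S) *
                (1 - MvPowerSeries.X 0) ^ S.card *
                (1 - MvPowerSeries.X 1) ^ (Sᶜ.card)) *
              (((1 - MvPowerSeries.X 0) * geo0) ^ (Sᶜ.card) *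
                ((1 - MvPowerSeries.X 1) * geo1) ^ (S.card)) := by
              rw [mul_pow, mul_pow]
              ring
          _ = (MvPowerSeries.X 0 : MvPowerSeries (Fin 2) ℤ) ^ (M.rk Finset.univ - M.rk S) *
                MvPowerSeries.X 1 ^ (S.card - M.rk S) *
                (1 - MvPowerSeries.X 0) ^ S.card *
                (1 - MvPowerSeries.X 1) ^ (Sᶜ.card) := by
              rw [g0, g1, mul_one, mul_one]

end
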